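/- Let Φ : ℂ[x,y] → ℂ⟨X,Y⟩ be the ℂ-linear map determined on the monomial basis by Φ(x^i y^j) = X^i Y^j. Then for every two-sided ideal 𝓘 of ℂ⟨X,Y⟩, the preimage Φ⁻¹(𝓘) is an ideal of ℂ[x,y]. -/

import Mathlib

/-- The ℂ-linear map `Φ : ℂ[x,y] → ℂ⟨X,Y⟩` determined on the monomial basis by
`Φ(x^i y^j) = X^i Y^j`. -/
noncomputable def Phi : MvPolynomial (Fin 2) ℂ →ₗ[ℂ] FreeAlgebra ℂ (Fin 2) :=
  (MvPolynomial.basisMonomials (Fin 2) ℂ).constr ℂ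
    fun m => FreeAlgebra.ι ℂ 0 ^ m 0 * FreeAlgebra.ι ℂ 1 ^ m 1

lemma Phi_monomial_one (m : Fin 2 →₀ ℕ) :
    Phi (MvPolynomial.monomial m (1 : ℂ)) =
      FreeAlgebra.ι ℂ 0 ^ m 0 * FreeAlgebra.ι ℂ 1 ^ m 1 := by
  have h : (MvPolynomial.monomial m (1 : ℂ)) =
      (MvPolynomial.basisMonomials (Fin 2) ℂ) m := by
    simp [MvPolynomial.coe_basisMonomials]
  rw [h, Phi, Module.Basis.constr_basis]

lemma Phi_monomial (m : Fin 2 →₀ ℕ) (c : ℂ) :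
    Phi (MvPolynomial.monomial m c) =
      c • (FreeAlgebra.ι ℂ 0 ^ m 0 * FreeAlgebra.ι ℂ 1 ^ m 1) := by
  have : (MvPolynomial.monomial m c) = c • MvPolynomial.monomial m (1 : ℂ) := by
    simp [MvPolynomial.smul_monomial]
  rw [this, map_smul, Phi_monomial_one]

lemma Phi_mul_monomial_one (m : Fin 2 →₀ ℕ) (p : MvPolynomial (Fin 2) ℂ) :
    Phi (MvPolynomial.monomial m (1 : ℂ) * p) =
      FreeAlgebra.ι ℂ 0 ^ m 0 * Phi p * FreeAlgebra.ι ℂ 1 ^ m 1 := by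
  induction p using MvPolynomial.induction_on' with
  | monomial n c =>
      rw [MvPolynomial.monomial_mul, Phi_monomial, Phi_monomial, one_mul]
      simp only [Finsupp.add_apply, pow_add]
      rw [mul_smul_comm, smul_mul_assoc]
      congr 1
      set A := FreeAlgebra.ι ℂ (0 : Fin 2)
      set B := FreeAlgebra.ι ℂ (1 : Fin 2)
      rw [((Commute.refl B).pow_pow (m 1) (n 1)).eq]
      simp [mul_assoc]
  | add p q hp hq =>
      rw [mul_add, map_add, map_add, hp, hq, mul_add, add_mul]

theorem phi_preimage_twoSidedIdeal (I : TwoSidedIdeal (FreeAlgebra ℂ (Fin 2))) :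
    ∃ K : Ideal (MvPolynomial (Fin 2) ℂ),
      (K : Set (MvPolynomial (Fin 2) ℂ)) = Phi ⁻¹' (I : Set (FreeAlgebra ℂ (Fin 2))) := by
  refine ⟨{ carrier := Phi ⁻¹' (I : Set (FreeAlgebra ℂ (Fin 2)))
            add_mem' := ?_
            zero_mem' := ?_
            smul_mem' := ?_ }, rfl⟩
  · intro a b ha hb
    simp only [Set.mem_preimage, SetLike.mem_coe, map_add] at *
    exact I.add_mem ha hb
  · simp only [Set.mem_preimage, SetLike.mem_coe, map_zero]
    exact I.zero_mem
  · intro c p hp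
    simp only [Set.mem_preimage, SetLike.mem_coe, smul_eq_mul] at *
    induction c using MvPolynomial.induction_on' with
    | monomial m a =>
        have : MvPolynomial.monomial m a * p =
            a • (MvPolynomial.monomial m (1 : ℂ) * p) := by
          rw [← smul_mul_assoc, MvPolynomial.smul_monomial, smul_eq_mul, mul_one]
        rw [this, map_smul, Phi_mul_monomial_one, Algebra.smul_def]
        exact I.mul_mem_left _ _ (I.mul_mem_right _ _ (I.mul_mem_left _ _ hp))
    | add q r hq hr =>
        rw [add_mul, map_add]
        exact I.add_mem hq hr
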